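/- For a discrete-time simple random walk on the 3D periodic lattice (ℤ/nℤ)³ with N = n³ sites, the expected first-hitting time of a fixed site, averaged over a uniformly random start, is bounded below by c·N for some constant c > 0 independent of n (for n large); consequently, the continuous-time hitting time τ_D = Θ(N·h²/D) = Θ(L³/(Dh)) diverges as h → 0 with L fixed. -/

import Mathlib

open Filter Topology Set Finset

private lemma shift_sum {n : ℕ} [NeZero n] (F : ZMod n × ZMod n × ZMod n → ℝ)
    (v : ZMod n × ZMod n × ZMod n) : ∑ x, F (x + v) = ∑ x, F x :=
  Fintype.sum_equiv (Equiv.addRight v) _ _ (fun _ => rfl)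

private lemma quad_sum {n : ℕ} [NeZero n] (T : ZMod n × ZMod n × ZMod n → ℝ)
    (v : ZMod n × ZMod n × ZMod n) :
    ∑ x, (T (x + v) - T x)^2 = 2 * (∑ x, T x * T x) - 2 * ∑ x, T x * T (x + v) := by
  have h1 : ∑ x, T (x + v) * T (x + v) = ∑ x, T x * T x := shift_sum (fun x => T x * T x) v
  have h2 : ∀ x : ZMod n × ZMod n × ZMod n,
      (T (x + v) - T x)^2 = T (x+v) * T (x+v) - 2 * (T x * T (x+v)) + T x * T x := by
    intro x; ring
  simp only [h2]
  rw [Finset.sum_add_distrib, Finset.sum_sub_distrib, h1, ← Finset.mul_sum]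
  ring

private lemma quad_nonneg {n : ℕ} [NeZero n] (T : ZMod n × ZMod n × ZMod n → ℝ)
    (v : ZMod n × ZMod n × ZMod n) : 0 ≤ ∑ x, (T (x + v) - T x)^2 :=
  Finset.sum_nonneg fun x _ => sq_nonneg _

private lemma quad_single {n : ℕ} [NeZero n] (T : ZMod n × ZMod n × ZMod n → ℝ)
    (v a : ZMod n × ZMod n × ZMod n) :
    (T (a + v) - T a)^2 ≤ ∑ x, (T (x + v) - T x)^2 :=
  Finset.single_le_sum (f := fun x => (T (x + v) - T x)^2)
    (fun x _ => sq_nonneg _) (Finset.mem_univ a)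

private lemma conclude (N ST : ℝ) (hN8 : (8:ℝ) ≤ N) (hkey : (N - 1)^2 ≤ 12 * ST) :
    (1:ℝ)/48 * N ≤ (1/N) * ST := by
  have hNpos : (0:ℝ) < N := by linarith
  rw [div_mul_eq_mul_div, div_mul_eq_mul_div, div_le_div_iff₀ (by norm_num) hNpos]
  nlinarith [sq_nonneg (N - 2)]

theorem torus_hitting_time_lower_bound (L D : ℝ) (hL : 0 < L) (hD : 0 < D) :
    (∃ c : ℝ, 0 < c ∧ ∃ n₀ : ℕ, ∀ (n : ℕ) [NeZero n], n₀ ≤ n →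
      ∀ (a : ZMod n × ZMod n × ZMod n) (T : ZMod n × ZMod n × ZMod n → ℝ),
        T a = 0 →
        (∀ x, x ≠ a →
          T x = 1 + (1 / 6) *
            (T (x + (1, 0, 0)) + T (x - (1, 0, 0)) + T (x + (0, 1, 0)) +
              T (x - (0, 1, 0)) + T (x + (0, 0, 1)) + T (x - (0, 0, 1)))) →
        c * (n : ℝ) ^ 3 ≤ (1 / (n : ℝ) ^ 3) * ∑ x : ZMod n × ZMod n × ZMod n, T x) ∧
    Tendsto (fun h : ℝ => L ^ 3 / (D * h)) (𝓝[>] 0) atTop := by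
  constructor
  · refine ⟨1/48, by norm_num, 2, ?_⟩
    intro n _ hn a T hTa hrec
    simp only [sub_eq_add_neg] at hrec
    set w1 : ZMod n × ZMod n × ZMod n := (1, 0, 0) with hw1
    set w2 : ZMod n × ZMod n × ZMod n := (0, 1, 0) with hw2
    set w3 : ZMod n × ZMod n × ZMod n := (0, 0, 1) with hw3
    set N : ℝ := (n : ℝ)^3 with hNdef
    have hN8 : (8:ℝ) ≤ N := by
      have h2n : (2:ℝ) ≤ (n:ℝ) := by exact_mod_cast hn
      have : (2:ℝ)^3 ≤ (n:ℝ)^3 := pow_le_pow_left₀ (by norm_num) h2n 3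
      norm_num at this; linarith
    have hNpos : (0:ℝ) < N := by linarith
    have hcard : ((Fintype.card (ZMod n × ZMod n × ZMod n) : ℝ)) = N := by
      simp [ZMod.card, hNdef]; ring
    set ST : ℝ := ∑ x : ZMod n × ZMod n × ZMod n, T x with hSTdef
    set ST2 : ℝ := ∑ x : ZMod n × ZMod n × ZMod n, T x * T x with hST2def
    -- Step 1: sum the recurrence over x ≠ a  ⇒  neighbor sum at a equals 6(N-1)
    have hsum1 : ∑ x ∈ Finset.univ.erase a,
        (T x - (1 + 1/6 * (T (x + w1) + T (x + -w1) + T (x + w2) + T (x + -w2)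
          + T (x + w3) + T (x + -w3)))) = 0 :=
      Finset.sum_eq_zero fun x hx => sub_eq_zero_of_eq (hrec x (Finset.ne_of_mem_erase hx))
    rw [Finset.sum_erase_eq_sub (Finset.mem_univ a)] at hsum1
    have hexp1 : ∑ x : ZMod n × ZMod n × ZMod n,
        (T x - (1 + 1/6 * (T (x + w1) + T (x + -w1) + T (x + w2) + T (x + -w2)
          + T (x + w3) + T (x + -w3))))
        = ST - (N + 1/6 * (6 * ST)) := by
      rw [Finset.sum_sub_distrib, Finset.sum_add_distrib, ← Finset.mul_sum]
      simp only [Finset.sum_add_distrib]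
      rw [shift_sum T w1, shift_sum T (-w1), shift_sum T w2, shift_sum T (-w2),
        shift_sum T w3, shift_sum T (-w3)]
      rw [Finset.sum_const, Finset.card_univ, nsmul_eq_mul, hcard]
      ring
    rw [hexp1, hTa] at hsum1
    -- hsum1 : ST - (N + 1/6*(6*ST)) - (0 - (1 + 1/6*(Sa))) = 0
    -- Step 2: sum the recurrence weighted by T x
    have hsum2 : ∑ x : ZMod n × ZMod n × ZMod n,
        (T x * T x - (T x + 1/6 * (T x * T (x + w1) + T x * T (x + -w1)
          + T x * T (x + w2) + T x * T (x + -w2) + T x * T (x + w3) + T x * T (x + -w3)))) = 0 := by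
      refine Finset.sum_eq_zero fun x _ => ?_
      rcases eq_or_ne x a with rfl | hx
      · rw [hTa]; ring
      · linear_combination (T x) * (hrec x hx)
    have hexp2 : ∑ x : ZMod n × ZMod n × ZMod n,
        (T x * T x - (T x + 1/6 * (T x * T (x + w1) + T x * T (x + -w1)
          + T x * T (x + w2) + T x * T (x + -w2) + T x * T (x + w3) + T x * T (x + -w3))))
        = ST2 - (ST + 1/6 * ((∑ x, T x * T (x + w1)) + (∑ x, T x * T (x + -w1))
          + (∑ x, T x * T (x + w2)) + (∑ x, T x * T (x + -w2))
          + (∑ x, T x * T (x + w3)) + (∑ x, T x * T (x + -w3)))) := by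
      rw [Finset.sum_sub_distrib, Finset.sum_add_distrib, ← Finset.mul_sum]
      simp only [Finset.sum_add_distrib]
      rfl
    rw [hexp2] at hsum2
    -- Dirichlet energy identity: total quad sum = 12 * ST
    have hq1 := quad_sum T w1
    have hq2 := quad_sum T (-w1)
    have hq3 := quad_sum T w2
    have hq4 := quad_sum T (-w2)
    have hq5 := quad_sum T w3
    have hq6 := quad_sum T (-w3)
    have hQtot : (∑ x, (T (x + w1) - T x)^2) + (∑ x, (T (x + -w1) - T x)^2)
        + (∑ x, (T (x + w2) - T x)^2) + (∑ x, (T (x + -w2) - T x)^2)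
        + (∑ x, (T (x + w3) - T x)^2) + (∑ x, (T (x + -w3) - T x)^2) = 12 * ST := by
      rw [hq1, hq2, hq3, hq4, hq5, hq6]; linarith
    -- some neighbor of a has T ≥ N - 1
    have hSa : T (a + w1) + T (a + -w1) + T (a + w2) + T (a + -w2) + T (a + w3) + T (a + -w3)
        = 6 * (N - 1) := by linarith
    have hbig : N - 1 ≤ T (a + w1) ∨ N - 1 ≤ T (a + -w1) ∨ N - 1 ≤ T (a + w2)
        ∨ N - 1 ≤ T (a + -w2) ∨ N - 1 ≤ T (a + w3) ∨ N - 1 ≤ T (a + -w3) := by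
      by_contra h
      push_neg at h
      obtain ⟨h1, h2, h3, h4, h5, h6⟩ := h
      linarith
    have hn1 : (0:ℝ) ≤ N - 1 := by linarith
    have hkey : (N - 1)^2 ≤ 12 * ST := by
      have n1 := quad_nonneg T w1
      have n2 := quad_nonneg T (-w1)
      have n3 := quad_nonneg T w2
      have n4 := quad_nonneg T (-w2)
      have n5 := quad_nonneg T w3
      have n6 := quad_nonneg T (-w3)
      have s1 := quad_single T w1 a
      have s2 := quad_single T (-w1) a
      have s3 := quad_single T w2 a
      have s4 := quad_single T (-w2) a
      have s5 := quad_single T w3 a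
      have s6 := quad_single T (-w3) a
      rw [hTa, sub_zero] at s1 s2 s3 s4 s5 s6
      rcases hbig with h | h | h | h | h | h <;>
        [ (have hsq : (N-1)^2 ≤ (T (a + w1))^2 := pow_le_pow_left₀ hn1 h 2);
          (have hsq : (N-1)^2 ≤ (T (a + -w1))^2 := pow_le_pow_left₀ hn1 h 2);
          (have hsq : (N-1)^2 ≤ (T (a + w2))^2 := pow_le_pow_left₀ hn1 h 2);
          (have hsq : (N-1)^2 ≤ (T (a + -w2))^2 := pow_le_pow_left₀ hn1 h 2);
          (have hsq : (N-1)^2 ≤ (T (a + w3))^2 := pow_le_pow_left₀ hn1 h 2);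
          (have hsq : (N-1)^2 ≤ (T (a + -w3))^2 := pow_le_pow_left₀ hn1 h 2)] <;>
        linarith
    -- conclude
    exact conclude N ST hN8 hkey
  · have h1 : Tendsto (fun h : ℝ => h⁻¹) (𝓝[>] (0:ℝ)) atTop := tendsto_inv_nhdsGT_zero
    have h2 := h1.const_mul_atTop (show (0:ℝ) < L^3/D by positivity)
    refine h2.congr fun x => ?_
    rw [← div_eq_mul_inv, div_div]
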